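/- Let R be a commutative ring with identity, a ∈ R a nilpotent element of index k (a^k = 0, a^{k−1} ≠ 0), and let s > 1 be the characteristic of the quotient ring R/⟨a⟩, where ⟨a⟩ is the principal ideal generated by a. Then f + ⟨a⟩ is a unit of R/⟨a⟩ if and only if f + ⟨a⟩ ⊆ R*, and for each x ∈ f + ⟨a⟩, x^{-1} = g·(x·g)^{s^{k−1} − 1}, where g ∈ R is any element with (f + ⟨a⟩)(g + ⟨a⟩) = 1 + ⟨a⟩. Moreover, if R is finite, |R*| = |(R/⟨a⟩)*| · |⟨a⟩|. -/

import Mathlib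

lemma aux_sq_zero {A : Type*} [CommRing A] (τ : A) (h : τ^2 = 0) :
    ∀ n : ℕ, (1+τ)^n = 1 + n • τ := by
  intro n
  induction n with
  | zero => simp
  | succ n ih =>
    rw [pow_succ, ih, add_smul, one_smul, nsmul_eq_mul]
    linear_combination (n : A) * h

lemma aux_step {R : Type*} [CommRing R] (I : Ideal R) (s : ℕ) (hsI : (s:R) ∈ I)
    (j : ℕ) (u : R) (hu : u ∈ I^(j+1)) : (1+u)^s - 1 ∈ I^(j+2) := by
  rw [← Ideal.Quotient.eq_zero_iff_mem]
  have hτ2 : (Ideal.Quotient.mk (I^(j+2)) u)^2 = 0 := by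
    rw [← map_pow, Ideal.Quotient.eq_zero_iff_mem]
    have h1 : u^2 ∈ (I^(j+1))^2 := Ideal.pow_mem_pow hu 2
    rw [← pow_mul] at h1
    exact Ideal.pow_le_pow_right (by omega) h1
  have hsu : (Ideal.Quotient.mk (I^(j+2))) ((s:R)*u) = 0 := by
    rw [Ideal.Quotient.eq_zero_iff_mem, pow_succ']
    exact Ideal.mul_mem_mul hsI hu
  have := aux_sq_zero _ hτ2 s
  push_cast [map_sub, map_pow, map_add, map_one]
  rw [this, nsmul_eq_mul]
  rw [map_mul, map_natCast] at hsu
  rw [hsu]; ring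

lemma aux_main {R : Type*} [CommRing R] (I : Ideal R) (s : ℕ) (hsI : (s:R) ∈ I)
    (t : R) (ht : t ∈ I) : ∀ j : ℕ, (1+t)^(s^j) - 1 ∈ I^(j+1) := by
  intro j
  induction j with
  | zero => simpa using ht
  | succ j ih =>
    have h := aux_step I s hsI j _ ih
    have e : (1 + ((1+t)^(s^j) - 1)) = (1+t)^(s^j) := by ring
    rw [e, ← pow_mul, ← pow_succ] at h
    exact h

/-- Let `R` be a commutative ring with identity, `a ∈ R` a
nilpotent element of index `k` (`a^k = 0`, `a^(k-1) ≠ 0`), and `s > 1` the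
characteristic of the quotient ring `R/⟨a⟩`.  Then `f + ⟨a⟩` is a unit of
`R/⟨a⟩` iff every element of `f + ⟨a⟩` is a unit of `R`; for each `x ∈ f + ⟨a⟩`,
`x⁻¹ = g * (x*g) ^ (s^(k-1) - 1)` where `g` is any element with
`(f + ⟨a⟩)(g + ⟨a⟩) = 1 + ⟨a⟩`; and if `R` is finite then
`|Rˣ| = |(R/⟨a⟩)ˣ| * |⟨a⟩|`. -/
theorem nilpotent_element_unit_lift {R : Type*} [CommRing R] (a : R) (k : ℕ)
    (hak : a ^ k = 0) (hak' : a ^ (k - 1) ≠ 0)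
    (s : ℕ) (hs : 1 < s) (hchar : CharP (R ⧸ Ideal.span {a}) s) (f : R) :
    (IsUnit (Ideal.Quotient.mk (Ideal.span {a}) f) ↔
      ∀ x : R, x - f ∈ Ideal.span {a} → IsUnit x) ∧
    (∀ g : R, Ideal.Quotient.mk (Ideal.span {a}) f * Ideal.Quotient.mk (Ideal.span {a}) g = 1 →
      ∀ x : R, x - f ∈ Ideal.span {a} →
        x * (g * (x * g) ^ (s ^ (k - 1) - 1)) = 1) ∧
    (Finite R → Nat.card Rˣ = Nat.card (R ⧸ Ideal.span {a})ˣ * Nat.card (Ideal.span {a})) := by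
  set I := Ideal.span {a} with hI
  have hk1 : 1 ≤ k := by
    by_contra h
    have : k = 0 := by omega
    subst this
    simp at hak hak'
    exact hak' hak
  have hIk : I ^ k = ⊥ := by
    rw [hI, Ideal.span_singleton_pow, hak, Ideal.span_singleton_eq_bot]
  have hsI : (s : R) ∈ I := by
    have h0 : ((s : ℕ) : R ⧸ I) = 0 := hchar.cast_eq_zero
    rw [← map_natCast (Ideal.Quotient.mk I), Ideal.Quotient.eq_zero_iff_mem] at h0
    exact h0
  have hm : 1 ≤ s ^ (k - 1) := Nat.one_le_pow _ _ (by omega)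
  -- the key computation (part 2)
  have key : ∀ f g : R, Ideal.Quotient.mk I f * Ideal.Quotient.mk I g = 1 →
      ∀ x : R, x - f ∈ I → x * (g * (x * g) ^ (s ^ (k - 1) - 1)) = 1 := by
    intro f g hfg x hx
    have hxg : (x * g) - 1 ∈ I := by
      rw [← Ideal.Quotient.eq_zero_iff_mem, map_sub, map_mul, map_one]
      have : Ideal.Quotient.mk I x = Ideal.Quotient.mk I f := Ideal.Quotient.eq.mpr hx
      rw [this, hfg, sub_self]
    have h := aux_main I s hsI _ hxg (k - 1)
    have e : (1 + (x * g - 1)) = x * g := by ring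
    rw [e] at h
    have hk' : k - 1 + 1 = k := by omega
    rw [hk', hIk, Ideal.mem_bot, sub_eq_zero] at h
    calc x * (g * (x * g) ^ (s ^ (k - 1) - 1))
        = (x * g) * (x * g) ^ (s ^ (k - 1) - 1) := by ring
      _ = (x * g) ^ (s ^ (k - 1) - 1 + 1) := (pow_succ' _ _).symm
      _ = 1 := by rw [Nat.sub_add_cancel hm, h]
  refine ⟨?_, key f, ?_⟩
  · constructor
    · intro h x hx
      obtain ⟨b, hb⟩ := h.exists_right_inv
      obtain ⟨g, rfl⟩ := Ideal.Quotient.mk_surjective b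
      exact IsUnit.of_mul_eq_one (a := x) _ (key f g hb x hx)
    · intro h
      exact (h f (by simp)).map (Ideal.Quotient.mk I)
  · intro hfin
    -- the unit groups
    let φ : Rˣ →* (R ⧸ I)ˣ := Units.map (Ideal.Quotient.mk I : R →+* R ⧸ I)
    have hsurj : Function.Surjective φ := by
      intro w
      obtain ⟨f', hf'⟩ := Ideal.Quotient.mk_surjective (w : R ⧸ I)
      obtain ⟨g', hg'⟩ := Ideal.Quotient.mk_surjective ((w⁻¹ : (R ⧸ I)ˣ) : R ⧸ I)
      have h1 : Ideal.Quotient.mk I f' * Ideal.Quotient.mk I g' = 1 := by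
        rw [hf', hg']; exact w.mul_inv
      have h2 := key f' g' h1 f' (by simp)
      refine ⟨(IsUnit.of_mul_eq_one (a := f') _ h2).unit, Units.ext ?_⟩
      simp [φ, hf']
    have hcard1 : Nat.card Rˣ = Nat.card (Rˣ ⧸ φ.ker) * Nat.card φ.ker :=
      Subgroup.card_eq_card_quotient_mul_card_subgroup φ.ker
    have hcard2 : Nat.card (Rˣ ⧸ φ.ker) = Nat.card (R ⧸ I)ˣ :=
      Nat.card_congr (QuotientGroup.quotientKerEquivOfSurjective φ hsurj).toEquiv
    have hcard3 : Nat.card φ.ker = Nat.card I := by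
      apply Nat.card_congr
      refine Equiv.ofBijective (fun u => ⟨((u : Rˣ) : R) - 1, ?_⟩) ⟨?_, ?_⟩
      · have hu : φ (u : Rˣ) = 1 := u.2
        have : Ideal.Quotient.mk I ((u : Rˣ) : R) = 1 := congrArg Units.val hu
        rw [← Ideal.Quotient.eq_zero_iff_mem, map_sub, map_one, this, sub_self]
      · intro u v huv
        have : ((u : Rˣ) : R) = ((v : Rˣ) : R) := by
          have := congrArg Subtype.val huv
          simpa [sub_left_inj] using this
        exact Subtype.ext (Units.ext this)
      · rintro ⟨t, ht⟩
        have h1 : Ideal.Quotient.mk I (1 : R) * Ideal.Quotient.mk I 1 = 1 := by simp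
        have h2 := key 1 1 h1 (1 + t) (by simpa using ht)
        have hu : IsUnit (1 + t) := IsUnit.of_mul_eq_one _ h2
        have hker : hu.unit ∈ φ.ker := by
          refine Units.ext ?_
          have : Ideal.Quotient.mk I (1 + t) = 1 := by
            rw [map_add, map_one, Ideal.Quotient.eq_zero_iff_mem.mpr ht, add_zero]
          simpa [φ] using this
        exact ⟨⟨hu.unit, hker⟩, Subtype.ext (by simp)⟩
    rw [hcard1, hcard2, hcard3]
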